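/- (Differentiating through the argmin, Lemma 1 of the paper.) Let g : ℝ^m × ℝ^n → ℝ be twice continuously differentiable and let θ̂ : ℝ^m → ℝ^n be a differentiable map such that for every η ∈ ℝ^m one has ∇_θ g(η, θ̂(η)) = 0 (in particular this holds when θ̂(η) is a minimiser of g(η, ·)). Suppose that at a point η ∈ ℝ^m the Hessian ∇²_θ g(η, θ̂(η)) is invertible. Then for every i ∈ {1,…,m}, ∂θ̂/∂η_i (η) = −(∇²_θ g(η, θ̂(η)))⁻¹ · ∂/∂η_i [∇_θ g(η, θ)]|_{θ = θ̂(η)}. -/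

import Mathlib

open InnerProductSpace ContinuousLinearMap


/-- Lemma 1 of the paper (differentiating through the argmin): if ∇_θ g(η, θ̂(η)) = 0
for all η and the Hessian ∇²_θ g(η, θ̂(η)) is invertible at a point η, then
∂θ̂/∂η_i (η) = −(∇²_θ g(η, θ̂(η)))⁻¹ · ∂/∂η_i [∇_θ g(η, θ)]|_{θ = θ̂(η)}. -/
theorem argmin_differentiation
    (m n : ℕ)
    (g : EuclideanSpace ℝ (Fin m) → EuclideanSpace ℝ (Fin n) → ℝ)
    (hg : ContDiff ℝ 2 (Function.uncurry g))
    (θhat : EuclideanSpace ℝ (Fin m) → EuclideanSpace ℝ (Fin n))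
    (hθhat : Differentiable ℝ θhat)
    (hstat : ∀ η, gradient (g η) (θhat η) = 0)
    (η : EuclideanSpace ℝ (Fin m))
    (hH : IsUnit (fderiv ℝ (fun θ => gradient (g η) θ) (θhat η)))
    (i : Fin m) :
    fderiv ℝ θhat η (EuclideanSpace.single i (1 : ℝ))
      = -(Ring.inverse (fderiv ℝ (fun θ => gradient (g η) θ) (θhat η)))
          (fderiv ℝ (fun η' => gradient (g η') (θhat η)) η
            (EuclideanSpace.single i (1 : ℝ))) := by
  let E := EuclideanSpace ℝ (Fin m)
  let F := EuclideanSpace ℝ (Fin n)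
  have hgd : Differentiable ℝ (Function.uncurry g) := hg.differentiable (by norm_num)
  set G : E × F → F := fun p => gradient (g p.1) p.2 with hG
  have hpart : ∀ p : E × F, fderiv ℝ (g p.1) p.2
      = (fderiv ℝ (Function.uncurry g) p).comp (ContinuousLinearMap.inr ℝ E F) := by
    intro p
    exact ((hgd p).hasFDerivAt.comp p.2 (f := fun f => (p.1, f)) (hasFDerivAt_prodMk_right p.1 p.2)).fderiv
  have hGeq : G = fun p => (toDual ℝ F).symm
      ((fderiv ℝ (Function.uncurry g) p).comp (ContinuousLinearMap.inr ℝ E F)) := by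
    funext p
    simp only [hG, gradient, hpart p]
  have hDdiff : Differentiable ℝ (fun p : E × F => fderiv ℝ (Function.uncurry g) p) :=
    (hg.fderiv_right (m := 1) (by norm_num)).differentiable (by norm_num)
  have hGdiff : Differentiable ℝ G := by
    rw [hGeq]
    exact ((toDual ℝ F).symm.toContinuousLinearEquiv.differentiable).comp
      (hDdiff.clm_comp (differentiable_const _))
  set DG := fderiv ℝ G (η, θhat η) with hDG
  have hD2 : fderiv ℝ (fun θ => gradient (g η) θ) (θhat η)
      = DG.comp (ContinuousLinearMap.inr ℝ E F) := by
    have h : HasFDerivAt (fun θ : F => G (η, θ)) (DG.comp (ContinuousLinearMap.inr ℝ E F))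
        (θhat η) := (hGdiff (η, θhat η)).hasFDerivAt.comp _ (hasFDerivAt_prodMk_right η (θhat η))
    exact h.fderiv
  have hD1 : fderiv ℝ (fun η' => gradient (g η') (θhat η)) η
      = DG.comp (ContinuousLinearMap.inl ℝ E F) := by
    have h : HasFDerivAt (fun η' : E => G (η', θhat η)) (DG.comp (ContinuousLinearMap.inl ℝ E F))
        η := (hGdiff (η, θhat η)).hasFDerivAt.comp η (f := fun e => (e, θhat η)) (hasFDerivAt_prodMk_left η (θhat η))
    exact h.fderiv
  have hzero : ∀ v : E, DG (v, fderiv ℝ θhat η v) = 0 := by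
    intro v
    have hcomp : HasFDerivAt (fun η' => G (η', θhat η'))
        (DG.comp ((ContinuousLinearMap.id ℝ E).prod (fderiv ℝ θhat η))) η :=
      (hGdiff (η, θhat η)).hasFDerivAt.comp η (f := fun x => (x, θhat x))
        ((hasFDerivAt_id η).prodMk (hθhat η).hasFDerivAt)
    have hconst : (fun η' => G (η', θhat η')) = fun _ => (0 : F) := by
      funext η'
      exact hstat η'
    rw [hconst] at hcomp
    have h0 := hcomp.unique (hasFDerivAt_const 0 η)
    have h1 := congrArg (fun (L : E →L[ℝ] F) => L v) h0
    simpa using h1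
  set v := EuclideanSpace.single i (1 : ℝ) with hv
  have key : fderiv ℝ (fun θ => gradient (g η) θ) (θhat η) (fderiv ℝ θhat η v)
      + fderiv ℝ (fun η' => gradient (g η') (θhat η)) η v = 0 := by
    rw [hD2, hD1]
    have hsplit : ((v, fderiv ℝ θhat η v) : E × F) = (v, 0) + (0, fderiv ℝ θhat η v) := by
      simp
    have h := hzero v
    rw [hsplit, map_add] at h
    simp only [ContinuousLinearMap.comp_apply, ContinuousLinearMap.inr_apply,
      ContinuousLinearMap.inl_apply]
    rw [add_comm]
    exact h
  set H := fderiv ℝ (fun θ => gradient (g η) θ) (θhat η) with hHdef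
  have hinv : Ring.inverse H * H = 1 := Ring.inverse_mul_cancel H hH
  have hcancel : Ring.inverse H (H (fderiv ℝ θhat η v)) = fderiv ℝ θhat η v := by
    have h := congrArg (fun (L : F →L[ℝ] F) => L (fderiv ℝ θhat η v)) hinv
    simpa [ContinuousLinearMap.mul_apply] using h
  have hHval : H (fderiv ℝ θhat η v) = -(fderiv ℝ (fun η' => gradient (g η') (θhat η)) η v) := by
    linear_combination (norm := module) key
  rw [← hcancel, hHval, map_neg]
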